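/- arXiv:1607.02129 — 2 statements merged into one kernel-verified Lean document; each statement's English description precedes it below -/
import Mathlib

section
/- Let ν be a Borel probability measure on [0,1] for which the L^q-spectrum τ(q) = lim_{r→0} log M_r^q(ν) / log r exists for all q > 0. Define s = sup{ t ≥ 0 : ∃ C > 0 such that ν(I) ≤ C|I|^t for all subintervals I ⊆ [0,1] }. Then s = inf{ t ≥ 0 : τ(q) < tq for all q > 0 }. -/
open MeasureTheory Filter
open scoped ENNReal ENat Topology

/-- Smallest number of sets of diameter ≤ r needed to cover E. -/
noncomputable def coverNum {X : Type*} [PseudoMetricSpace X] (r : ℝ) (E : Set X) : ℕ∞ :=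
  sInf {n : ℕ∞ | ∃ 𝒰 : Finset (Set X), (𝒰.card : ℕ∞) = n ∧
    (∀ U ∈ 𝒰, Metric.diam U ≤ r) ∧ E ⊆ ⋃₀ ↑𝒰}

/-- Assouad dimension. -/
noncomputable def assouadDim {X : Type*} [PseudoMetricSpace X] (F : Set X) : ℝ :=
  sInf {d : ℝ | ∃ C : ℝ, 0 < C ∧ ∀ R r : ℝ, 0 < r → r < R → ∀ x ∈ F,
    (coverNum r (Metric.ball x R ∩ F) : ℝ≥0∞) ≤ ENNReal.ofReal (C * (R / r) ^ d)}

/-- (Upper) box-counting dimension. -/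
noncomputable def boxDim {X : Type*} [PseudoMetricSpace X] (E : Set X) : ℝ :=
  Filter.limsup (fun r : ℝ => Real.log ((coverNum r E).toNat : ℝ) / (-Real.log r)) (𝓝[>] 0)

/-- Frostman exponent w.r.t. subintervals of [0,1]. -/
noncomputable def frostmanExp01 (ν : Measure ℝ) : ℝ :=
  sSup {t : ℝ | 0 ≤ t ∧ ∃ C : ℝ, 0 < C ∧ ∀ a b : ℝ, 0 ≤ a → a ≤ b → b ≤ 1 →
    ν (Set.Icc a b) ≤ ENNReal.ofReal (C * (b - a) ^ t)}

/-- Frostman exponent w.r.t. all intervals of ℝ. -/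
noncomputable def frostmanExp (ν : Measure ℝ) : ℝ :=
  sSup {t : ℝ | 0 ≤ t ∧ ∃ C : ℝ, 0 < C ∧ ∀ a b : ℝ, a ≤ b →
    ν (Set.Icc a b) ≤ ENNReal.ofReal (C * (b - a) ^ t)}

/-- Topological support of a measure on ℝ. -/
noncomputable def mSupp (ν : Measure ℝ) : Set ℝ :=
  {x | ∀ r : ℝ, 0 < r → 0 < ν (Metric.ball x r)}

/-- The packing quantity M_r^q(ν): supremum of Σ ν(B(xᵢ,r))^q over finite
centered packings of supp ν by pairwise disjoint balls of radius r. -/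
noncomputable def Mrq (ν : Measure ℝ) (q r : ℝ) : ℝ≥0∞ :=
  sSup {v : ℝ≥0∞ | ∃ P : Finset ℝ, ↑P ⊆ mSupp ν ∧
    (↑P : Set ℝ).Pairwise (fun x y => Disjoint (Metric.ball x r) (Metric.ball y r)) ∧
    v = ∑ x ∈ P, ν (Metric.ball x r) ^ q}

/-- The closed unit square. -/
def unitSq : Set (ℝ × ℝ) := Set.Icc (0:ℝ) 1 ×ˢ Set.Icc (0:ℝ) 1

/-- Composition S_{i₁} ∘ ⋯ ∘ S_{i_k} for a finite word. -/
def itMap {m : ℕ} (S : Fin m → ℝ × ℝ → ℝ × ℝ) (w : List (Fin m)) : ℝ × ℝ → ℝ × ℝ :=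
  w.foldr (fun i f => S i ∘ f) id

/-- ν is the (rescaled) Bernoulli convolution with parameter b: the unique
probability measure on [0,1] satisfying the self-similarity relation
ν = ½ ν∘(b·)⁻¹ + ½ ν∘(b·+(1−b))⁻¹. -/
def IsBernoulliConv (b : ℝ) (ν : Measure ℝ) : Prop :=
  IsProbabilityMeasure ν ∧ ν (Set.Icc (0:ℝ) 1)ᶜ = 0 ∧
    ν = (1/2 : ℝ≥0∞) • ν.map (fun x => b * x) + (1/2 : ℝ≥0∞) • ν.map (fun x => b * x + (1 - b))

set_option linter.unusedSectionVars false
set_option linter.unusedVariables false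
set_option maxHeartbeats 1000000

section helpers
variable {ν : Measure ℝ} [IsProbabilityMeasure ν]

lemma mSupp_subset (hsupp : ν (Set.Icc (0:ℝ) 1)ᶜ = 0) : mSupp ν ⊆ Set.Icc (0:ℝ) 1 := by
  intro x hx
  by_contra hxI
  simp only [Set.mem_Icc, not_and_or, not_le] at hxI
  have key : ∃ r > 0, Metric.ball x r ⊆ (Set.Icc (0:ℝ) 1)ᶜ := by
    rcases hxI with h | h
    · refine ⟨-x, by linarith, fun y hy => ?_⟩
      simp only [Metric.mem_ball, Real.dist_eq] at hy
      have : y < 0 := by cases abs_lt.1 hy; linarith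
      simp only [Set.mem_compl_iff, Set.mem_Icc, not_and_or, not_le]
      exact Or.inl this
    · refine ⟨x - 1, by linarith, fun y hy => ?_⟩
      simp only [Metric.mem_ball, Real.dist_eq] at hy
      have : 1 < y := by cases abs_lt.1 hy; linarith
      simp only [Set.mem_compl_iff, Set.mem_Icc, not_and_or, not_le]
      exact Or.inr this
  obtain ⟨r, hr, hsub⟩ := key
  have := hx r hr
  have hz : ν (Metric.ball x r) = 0 := measure_mono_null hsub hsupp
  simp [hz] at this

lemma measure_compl_mSupp : ν (mSupp ν)ᶜ = 0 := by
  apply measure_null_of_locally_null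
  intro x hx
  simp only [Set.mem_compl_iff, mSupp, Set.mem_setOf_eq, not_forall] at hx
  obtain ⟨r, hr, hxr⟩ := hx
  exact ⟨Metric.ball x r, mem_nhdsWithin_of_mem_nhds (Metric.ball_mem_nhds x hr),
    le_antisymm (not_lt.1 hxr) (zero_le)⟩

lemma measure_Icc01 (hsupp : ν (Set.Icc (0:ℝ) 1)ᶜ = 0) : ν (Set.Icc (0:ℝ) 1) = 1 := by
  have h := measure_add_measure_compl (μ := ν) (measurableSet_Icc (a := (0:ℝ)) (b := 1))
  rw [hsupp, add_zero] at h
  simpa using h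

lemma nonempty_inter_mSupp {A : Set ℝ} (hA : ν A ≠ 0) : (A ∩ mSupp ν).Nonempty := by
  rw [Set.nonempty_iff_ne_empty]
  intro h
  apply hA
  have : A ⊆ (mSupp ν)ᶜ ∪ (A ∩ mSupp ν) := by
    intro y hy
    by_cases hys : y ∈ mSupp ν
    · exact Or.inr ⟨hy, hys⟩
    · exact Or.inl hys
  rw [h, Set.union_empty] at this
  exact measure_mono_null this measure_compl_mSupp

lemma mSupp_nonempty (hsupp : ν (Set.Icc (0:ℝ) 1)ᶜ = 0) : (mSupp ν).Nonempty := by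
  obtain ⟨x, _, hx⟩ := nonempty_inter_mSupp (ν := ν) (A := Set.univ)
    (by simp [measure_univ])
  exact ⟨x, hx⟩

end helpers

lemma sep_of_disjoint {x y r : ℝ} (hr : 0 < r)
    (h : Disjoint (Metric.ball x r) (Metric.ball y r)) (hne : x ≠ y) : 2 * r ≤ |x - y| := by
  by_contra hlt
  push_neg at hlt
  have hx : (x + y) / 2 ∈ Metric.ball x r := by
    simp only [Metric.mem_ball, Real.dist_eq]
    rw [show (x + y) / 2 - x = (y - x) / 2 by ring, abs_div]
    rw [abs_sub_comm] at hlt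
    simp only [abs_two]
    linarith
  have hy : (x + y) / 2 ∈ Metric.ball y r := by
    simp only [Metric.mem_ball, Real.dist_eq]
    rw [show (x + y) / 2 - y = (x - y) / 2 by ring, abs_div]
    simp only [abs_two]
    linarith
  exact Set.disjoint_left.1 h hx hy

lemma card_packing {P : Finset ℝ} {r : ℝ} (hr : 0 < r) (hP : ↑P ⊆ Set.Icc (0:ℝ) 1)
    (hd : (↑P : Set ℝ).Pairwise (fun x y => Disjoint (Metric.ball x r) (Metric.ball y r))) :
    P.card ≤ ⌊1 / (2 * r)⌋₊ + 1 := by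
  have h2r : (0:ℝ) < 2 * r := by linarith
  have key : ∀ x ∈ P, ∀ y ∈ P, x < y → ⌊x / (2*r)⌋₊ + 1 ≤ ⌊y / (2*r)⌋₊ := by
    intro x hx y hy hxy
    have hsep := sep_of_disjoint hr (hd hx hy (ne_of_lt hxy)) (ne_of_lt hxy)
    have hyx : x + 2*r ≤ y := by
      rw [abs_sub_comm, abs_of_pos (by linarith)] at hsep; linarith
    have hx0 : (0:ℝ) ≤ x / (2*r) := div_nonneg (hP hx).1 h2r.le
    calc ⌊x / (2*r)⌋₊ + 1 = ⌊x / (2*r) + 1⌋₊ := (Nat.floor_add_one hx0).symm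
      _ ≤ ⌊y / (2*r)⌋₊ := by
          apply Nat.floor_le_floor
          rw [div_add' _ _ _ (ne_of_gt h2r)]
          gcongr
          linarith
  calc P.card ≤ (Finset.range (⌊1 / (2 * r)⌋₊ + 1)).card := ?_
    _ = ⌊1 / (2 * r)⌋₊ + 1 := Finset.card_range _
  refine Finset.card_le_card_of_injOn (fun x => ⌊x / (2*r)⌋₊) (fun x hx => ?_) ?_
  · simp only [Finset.coe_range, Set.mem_Iio]
    have : x / (2*r) ≤ 1 / (2*r) := by
      gcongr
      exact (hP hx).2
    calc ⌊x / (2*r)⌋₊ ≤ ⌊1 / (2*r)⌋₊ := Nat.floor_le_floor this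
      _ < ⌊1 / (2*r)⌋₊ + 1 := Nat.lt_succ_self _
  · intro x hx y hy hf
    simp only at hf
    by_contra hne
    rcases lt_or_gt_of_ne hne with h | h
    · have := key x hx y hy h; omega
    · have := key y hy x hx h; omega

section helpers
variable {ν : Measure ℝ} [IsProbabilityMeasure ν]

lemma Mrq_le_of_ball_le (hsupp : ν (Set.Icc (0:ℝ) 1)ᶜ = 0) {q r B : ℝ}
    (hq : 0 < q) (hr : 0 < r) (hB : 0 ≤ B)
    (hball : ∀ x ∈ mSupp ν, ν (Metric.ball x r) ≤ ENNReal.ofReal B) :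
    Mrq ν q r ≤ (⌊1/(2*r)⌋₊ + 1 : ℕ) * ENNReal.ofReal (B ^ q) := by
  apply sSup_le
  rintro v ⟨P, hPs, hPd, rfl⟩
  calc ∑ x ∈ P, ν (Metric.ball x r) ^ q ≤ P.card • ENNReal.ofReal (B ^ q) := by
        apply Finset.sum_le_card_nsmul
        intro x hx
        have h1 : ν (Metric.ball x r) ^ q ≤ (ENNReal.ofReal B) ^ q :=
          ENNReal.rpow_le_rpow (hball x (hPs hx)) hq.le
        rwa [ENNReal.ofReal_rpow_of_nonneg hB hq.le] at h1
    _ ≤ (⌊1/(2*r)⌋₊ + 1 : ℕ) * ENNReal.ofReal (B ^ q) := by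
        rw [nsmul_eq_mul]
        gcongr
        exact_mod_cast card_packing hr (hPs.trans (mSupp_subset hsupp)) hPd

lemma Mrq_ne_top (hsupp : ν (Set.Icc (0:ℝ) 1)ᶜ = 0) {q r : ℝ} (hq : 0 < q) (hr : 0 < r) :
    Mrq ν q r ≠ ∞ := by
  have h := Mrq_le_of_ball_le hsupp hq hr zero_le_one
    (fun x _ => by rw [ENNReal.ofReal_one]; exact prob_le_one)
  intro htop
  rw [htop] at h
  simp [Real.one_rpow] at h

lemma le_Mrq {q r : ℝ} {x : ℝ} (hx : x ∈ mSupp ν) :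
    ν (Metric.ball x r) ^ q ≤ Mrq ν q r := by
  apply le_sSup
  exact ⟨{x}, by simpa using hx, by simp, by simp⟩

lemma Mrq_pos (hsupp : ν (Set.Icc (0:ℝ) 1)ᶜ = 0) {q r : ℝ} (hr : 0 < r) :
    0 < Mrq ν q r := by
  obtain ⟨x, hx⟩ := mSupp_nonempty hsupp
  have h1 : 0 < ν (Metric.ball x r) := hx r hr
  calc (0:ℝ≥0∞) < ν (Metric.ball x r) ^ q :=
        ENNReal.rpow_pos h1 (measure_ne_top ν _)
    _ ≤ Mrq ν q r := le_Mrq hx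

lemma Mrq_toReal_pos (hsupp : ν (Set.Icc (0:ℝ) 1)ᶜ = 0) {q r : ℝ} (hq : 0 < q) (hr : 0 < r) :
    0 < (Mrq ν q r).toReal :=
  ENNReal.toReal_pos (ne_of_gt (Mrq_pos hsupp hr)) (Mrq_ne_top hsupp hq hr)

lemma dyadic_ball (hsupp : ν (Set.Icc (0:ℝ) 1)ᶜ = 0) (m : ℕ) {ρ : ℝ}
    (hρ : ((2:ℝ)^m)⁻¹ < ρ) :
    ∃ x ∈ mSupp ν, ENNReal.ofReal (((2:ℝ)^m)⁻¹) ≤ ν (Metric.ball x ρ) := by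
  set ℓ : ℝ := ((2:ℝ)^m)⁻¹ with hℓdef
  have hℓ : 0 < ℓ := by positivity
  have hℓ1 : (2:ℝ)^m * ℓ = 1 := by rw [hℓdef]; exact mul_inv_cancel₀ (by positivity)
  have hcov : Set.Icc (0:ℝ) 1 ⊆ ⋃ k ∈ Finset.range (2^m), Set.Icc (k*ℓ) ((k+1)*ℓ) := by
    intro y hy
    simp only [Set.mem_iUnion, Finset.mem_range, Set.mem_Icc]
    by_cases hk : ⌊y/ℓ⌋₊ < 2^m
    · refine ⟨⌊y/ℓ⌋₊, hk, ?_, ?_⟩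
      · calc (⌊y/ℓ⌋₊ : ℝ) * ℓ ≤ (y/ℓ) * ℓ := by
              gcongr; exact Nat.floor_le (div_nonneg hy.1 hℓ.le)
          _ = y := by field_simp
      · have := Nat.lt_floor_add_one (y/ℓ)
        calc y = (y/ℓ) * ℓ := by field_simp
          _ ≤ (⌊y/ℓ⌋₊ + 1 : ℝ) * ℓ := mul_le_mul_of_nonneg_right this.le hℓ.le
    · push_neg at hk
      have h2m : (2:ℝ)^m ≤ y/ℓ := by
        exact_mod_cast (Nat.le_floor_iff (div_nonneg hy.1 hℓ.le)).1 hk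
      have hy1 : 1 ≤ y := by
        have : (2:ℝ)^m * ℓ ≤ (y/ℓ) * ℓ := by gcongr
        rw [hℓ1] at this
        calc (1:ℝ) ≤ (y/ℓ)*ℓ := this
          _ = y := by field_simp
      have hyeq : y = 1 := le_antisymm hy.2 hy1
      have h2m0 : 0 < 2^m := Nat.two_pow_pos m
      have h1n : (2^m - 1 : ℕ) + 1 = 2^m := by omega
      have hcast : ((2^m - 1 : ℕ) : ℝ) + 1 = (2:ℝ)^m := by
        calc ((2^m - 1 : ℕ) : ℝ) + 1 = (((2^m - 1 : ℕ) + 1 : ℕ) : ℝ) := by push_cast; ring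
          _ = ((2^m : ℕ) : ℝ) := by rw [h1n]
          _ = (2:ℝ)^m := by push_cast; ring
      refine ⟨2^m - 1, by omega, ?_, ?_⟩
      · rw [hyeq]
        have hle : ((2^m - 1 : ℕ) : ℝ) ≤ (2:ℝ)^m := by linarith
        calc ((2^m - 1 : ℕ) : ℝ) * ℓ ≤ (2:ℝ)^m * ℓ := by gcongr
          _ = 1 := hℓ1
      · rw [hyeq, hcast, hℓ1]
  have hub : (1:ℝ≥0∞) ≤ ∑ k ∈ Finset.range (2^m), ν (Set.Icc (k*ℓ) ((k+1)*ℓ)) := by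
    calc (1:ℝ≥0∞) = ν (Set.Icc (0:ℝ) 1) := (measure_Icc01 hsupp).symm
      _ ≤ ν (⋃ k ∈ Finset.range (2^m), Set.Icc (k*ℓ) ((k+1)*ℓ)) := measure_mono hcov
      _ ≤ ∑ k ∈ Finset.range (2^m), ν (Set.Icc (k*ℓ) ((k+1)*ℓ)) := measure_biUnion_finset_le _ _
  have hfin : ∀ k ∈ Finset.range (2^m), ν (Set.Icc ((k:ℝ)*ℓ) ((k+1)*ℓ)) ≠ ∞ :=
    fun k _ => measure_ne_top ν _
  have hreal : (1:ℝ) ≤ ∑ k ∈ Finset.range (2^m), (ν (Set.Icc ((k:ℝ)*ℓ) ((k+1)*ℓ))).toReal := by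
    have hs : (∑ k ∈ Finset.range (2^m), ν (Set.Icc ((k:ℝ)*ℓ) ((k+1)*ℓ))) ≠ ∞ :=
      (ENNReal.sum_lt_top.2 (fun k hk => lt_of_le_of_ne le_top (hfin k hk))).ne
    have := ENNReal.toReal_mono hs hub
    rwa [ENNReal.toReal_one, ENNReal.toReal_sum hfin] at this
  have hone : ∑ _k ∈ Finset.range (2^m), ℓ = 1 := by
    rw [Finset.sum_const, Finset.card_range, nsmul_eq_mul]
    push_cast
    rw [hℓ1]
  have hsum2 : ∑ _k ∈ Finset.range (2^m), ℓ ≤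
      ∑ k ∈ Finset.range (2^m), (ν (Set.Icc ((k:ℝ)*ℓ) ((k+1)*ℓ))).toReal := by
    rw [hone]; exact hreal
  obtain ⟨k, hk, hkl⟩ := Finset.exists_le_of_sum_le
    (Finset.nonempty_range_iff.2 (Nat.two_pow_pos m).ne') hsum2
  have hne : ν (Set.Icc ((k:ℝ)*ℓ) ((k+1)*ℓ)) ≠ 0 := by
    intro h
    rw [h] at hkl
    simp only [ENNReal.toReal_zero] at hkl
    linarith
  obtain ⟨x, hxI, hxs⟩ := nonempty_inter_mSupp hne
  refine ⟨x, hxs, ?_⟩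
  have hsub : Set.Icc ((k:ℝ)*ℓ) ((k+1)*ℓ) ⊆ Metric.ball x ρ := by
    intro y hy
    simp only [Metric.mem_ball]
    calc dist y x ≤ (k+1)*ℓ - k*ℓ := Real.dist_le_of_mem_Icc hy hxI
      _ = ℓ := by ring
      _ < ρ := hρ
  calc ENNReal.ofReal ℓ ≤ ENNReal.ofReal ((ν (Set.Icc ((k:ℝ)*ℓ) ((k+1)*ℓ))).toReal) :=
        ENNReal.ofReal_le_ofReal hkl
    _ = ν (Set.Icc ((k:ℝ)*ℓ) ((k+1)*ℓ)) := ENNReal.ofReal_toReal (measure_ne_top ν _)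
    _ ≤ ν (Metric.ball x ρ) := measure_mono hsub

end helpers

section main
variable {ν : Measure ℝ} [IsProbabilityMeasure ν]

lemma tau_le (hsupp : ν (Set.Icc (0:ℝ) 1)ᶜ = 0) {q : ℝ} (hq : 0 < q) {τq : ℝ}
    (h : Tendsto (fun r : ℝ => Real.log (Mrq ν q r).toReal / Real.log r) (𝓝[>] 0) (𝓝 τq)) :
    τq ≤ 2 * q := by
  set R : ℕ → ℝ := fun n => ((2:ℝ)^n)⁻¹ with hRdef
  have hR0 : ∀ n, 0 < R n := fun n => by positivity
  have hRt : Tendsto R atTop (𝓝[>] (0:ℝ)) := by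
    apply tendsto_nhdsWithin_of_tendsto_nhds_of_eventually_within
    · exact tendsto_inv_atTop_zero.comp (tendsto_pow_atTop_atTop_of_one_lt one_lt_two)
    · exact Eventually.of_forall hR0
  have hcomp := h.comp hRt
  apply le_of_tendsto hcomp
  filter_upwards [eventually_ge_atTop 1] with n hn
  simp only [Function.comp]
  set ℓ : ℝ := ((2:ℝ)^(2*n))⁻¹ with hℓdef
  have hℓ0 : 0 < ℓ := by positivity
  have hℓR : ℓ < R n := by
    rw [hℓdef, hRdef]
    apply inv_strictAnti₀ (by positivity)
    exact pow_lt_pow_right₀ one_lt_two (by omega)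
  obtain ⟨x, hx, hball⟩ := dyadic_ball hsupp (2*n) hℓR
  set M : ℝ≥0∞ := Mrq ν q (R n) with hMdef
  have hMne : M ≠ ∞ := Mrq_ne_top hsupp hq (hR0 n)
  have hle : ENNReal.ofReal (ℓ ^ q) ≤ M := by
    rw [← ENNReal.ofReal_rpow_of_nonneg hℓ0.le hq.le]
    exact le_trans (ENNReal.rpow_le_rpow hball hq.le) (le_Mrq hx)
  have hm : ℓ ^ q ≤ M.toReal := by
    have := ENNReal.toReal_mono hMne hle
    rwa [ENNReal.toReal_ofReal (by positivity)] at this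
  have hmpos : 0 < M.toReal := lt_of_lt_of_le (by positivity) hm
  have hlogm : -(2*(n:ℝ)*q) * Real.log 2 ≤ Real.log M.toReal := by
    calc -(2*(n:ℝ)*q) * Real.log 2 = q * Real.log ℓ := by
          rw [hℓdef, Real.log_inv, Real.log_pow]; push_cast; ring
      _ = Real.log (ℓ ^ q) := (Real.log_rpow hℓ0 q).symm
      _ ≤ Real.log M.toReal := Real.log_le_log (by positivity) hm
  have hlogR : Real.log (R n) = -((n:ℝ) * Real.log 2) := by
    rw [hRdef, Real.log_inv, Real.log_pow]
  have hlogRneg : Real.log (R n) < 0 := by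
    rw [hlogR]
    have h2 : 0 < Real.log 2 := Real.log_pos one_lt_two
    have hn1 : (1:ℝ) ≤ (n:ℝ) := by exact_mod_cast hn
    nlinarith
  rw [div_le_iff_of_neg hlogRneg, hlogR]
  nlinarith [Real.log_pos one_lt_two, hlogm]

lemma tau_ge (hsupp : ν (Set.Icc (0:ℝ) 1)ᶜ = 0) {q t C : ℝ} (hq : 0 < q) (ht : 0 ≤ t)
    (hC : 0 < C)
    (hF : ∀ a b : ℝ, 0 ≤ a → a ≤ b → b ≤ 1 →
      ν (Set.Icc a b) ≤ ENNReal.ofReal (C * (b - a) ^ t))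
    {τq : ℝ}
    (h : Tendsto (fun r : ℝ => Real.log (Mrq ν q r).toReal / Real.log r) (𝓝[>] 0) (𝓝 τq)) :
    t * q - 1 ≤ τq := by
  set K : ℝ := C ^ q * (2:ℝ) ^ (t*q) with hKdef
  have hK : 0 < K := by positivity
  have hgt : Tendsto (fun r : ℝ => (t*q - 1) + (-Real.log K) * (-Real.log r)⁻¹)
      (𝓝[>] (0:ℝ)) (𝓝 (t*q - 1)) := by
    have h1 : Tendsto (fun r : ℝ => -Real.log r) (𝓝[>] (0:ℝ)) atTop :=
      tendsto_neg_atBot_atTop.comp Real.tendsto_log_nhdsGT_zero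
    have h2 : Tendsto (fun r : ℝ => (-Real.log r)⁻¹) (𝓝[>] (0:ℝ)) (𝓝 0) :=
      h1.inv_tendsto_atTop
    have h3 := (h2.const_mul (-Real.log K)).const_add (t*q - 1)
    simpa using h3
  refine le_of_tendsto_of_tendsto hgt h ?_
  filter_upwards [Ioo_mem_nhdsGT_of_mem (a := (1/2:ℝ)) (c := (0:ℝ))
    (Set.mem_Ico.2 ⟨le_refl (0:ℝ), by norm_num⟩)] with r hr
  obtain ⟨hr0, hr12⟩ := hr
  have hr1 : r < 1 := by linarith
  have hball : ∀ x ∈ mSupp ν, ν (Metric.ball x r) ≤ ENNReal.ofReal (C * (2*r) ^ t) := by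
    intro x hx
    obtain ⟨hx0, hx1⟩ := mSupp_subset hsupp hx
    set a' : ℝ := max (x - r) 0 with ha'def
    set b' : ℝ := min (x + r) 1 with hb'def
    have ha'0 : 0 ≤ a' := le_max_right _ _
    have ha'x : a' ≤ x := max_le (by linarith) hx0
    have hxb' : x ≤ b' := le_min (by linarith) hx1
    have hb'1 : b' ≤ 1 := min_le_right _ _
    have hsub : Metric.ball x r ⊆ Set.Icc a' b' ∪ (Set.Icc (0:ℝ) 1)ᶜ := by
      intro y hy
      simp only [Metric.mem_ball, Real.dist_eq] at hy
      by_cases hy01 : y ∈ Set.Icc (0:ℝ) 1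
      · left
        obtain ⟨hy0, hy1⟩ := hy01
        obtain ⟨h1, h2⟩ := abs_lt.1 hy
        exact ⟨max_le (by linarith) hy0, le_min (by linarith) hy1⟩
      · right; exact hy01
    calc ν (Metric.ball x r) ≤ ν (Set.Icc a' b' ∪ (Set.Icc (0:ℝ) 1)ᶜ) := measure_mono hsub
      _ ≤ ν (Set.Icc a' b') + ν (Set.Icc (0:ℝ) 1)ᶜ := measure_union_le _ _
      _ = ν (Set.Icc a' b') := by rw [hsupp, add_zero]
      _ ≤ ENNReal.ofReal (C * (b' - a') ^ t) := hF a' b' ha'0 (le_trans ha'x hxb') hb'1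
      _ ≤ ENNReal.ofReal (C * (2*r) ^ t) := by
          apply ENNReal.ofReal_le_ofReal
          apply mul_le_mul_of_nonneg_left _ hC.le
          apply Real.rpow_le_rpow (by linarith) _ ht
          have h1 : x - r ≤ a' := le_max_left _ _
          have h2 : b' ≤ x + r := min_le_left _ _
          linarith
  have hM := Mrq_le_of_ball_le hsupp hq hr0 (by positivity) hball
  set N : ℕ := ⌊1/(2*r)⌋₊ + 1 with hNdef
  set m : ℝ := (Mrq ν q r).toReal with hmdef
  have hmpos : 0 < m := Mrq_toReal_pos hsupp hq hr0
  have hmle : m ≤ (N:ℝ) * (C * (2*r) ^ t) ^ q := by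
    apply ENNReal.toReal_le_of_le_ofReal (by positivity)
    rw [ENNReal.ofReal_mul (by positivity)]
    calc Mrq ν q r ≤ (N:ℕ) * ENNReal.ofReal ((C * (2*r) ^ t) ^ q) := hM
      _ = ENNReal.ofReal ((N:ℝ)) * ENNReal.ofReal ((C * (2*r) ^ t) ^ q) := by
          rw [ENNReal.ofReal_natCast]
  have hNle : (N:ℝ) ≤ 1/r := by
    have h1 : (⌊1/(2*r)⌋₊ : ℝ) ≤ 1/(2*r) := Nat.floor_le (by positivity)
    have h2 : (1:ℝ) ≤ 1/(2*r) := by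
      rw [le_div_iff₀ (by positivity : (0:ℝ) < 2*r)]
      linarith
    have h3 : 1/(2*r) + 1/(2*r) = 1/r := by
      rw [← add_div, div_eq_div_iff (by positivity) hr0.ne']
      ring
    rw [hNdef]
    push_cast
    linarith
  have hm2 : m ≤ K * r ^ (t*q - 1) := by
    have e1 : (C * (2*r) ^ t) ^ q = C^q * (2*r) ^ (t*q) := by
      rw [Real.mul_rpow hC.le (by positivity), Real.rpow_mul (by linarith) t q]
    have e2 : (2*r : ℝ) ^ (t*q) = (2:ℝ)^(t*q) * r^(t*q) := Real.mul_rpow (by norm_num) hr0.le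
    have e3 : r ^ (t*q - 1) = r ^ (t*q) / r := by
      rw [Real.rpow_sub hr0, Real.rpow_one]
    calc m ≤ (N:ℝ) * (C * (2*r) ^ t) ^ q := hmle
      _ ≤ (1/r) * (C * (2*r) ^ t) ^ q := by
          apply mul_le_mul_of_nonneg_right hNle (by positivity)
      _ = K * r ^ (t*q - 1) := by rw [e1, e2, e3, hKdef]; field_simp
  have hlog : Real.log m ≤ Real.log K + (t*q - 1) * Real.log r := by
    calc Real.log m ≤ Real.log (K * r ^ (t*q - 1)) := Real.log_le_log hmpos hm2
      _ = Real.log K + (t*q-1) * Real.log r := by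
          rw [Real.log_mul hK.ne' (Real.rpow_pos_of_pos hr0 _).ne', Real.log_rpow hr0]
  have hlogr : Real.log r < 0 := Real.log_neg hr0 hr1
  have key : (Real.log K + (t*q - 1) * Real.log r) / Real.log r ≤ Real.log m / Real.log r :=
    div_le_div_of_nonpos_of_le hlogr.le hlog
  have hlrne : Real.log r ≠ 0 := ne_of_lt hlogr
  have expand : (Real.log K + (t*q - 1) * Real.log r) / Real.log r
      = (t*q - 1) + (-Real.log K) * (-Real.log r)⁻¹ := by
    rw [inv_neg, mul_neg, neg_mul, neg_neg, add_div, mul_div_assoc, div_self hlrne, mul_one,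
      ← div_eq_mul_inv, add_comm]
  rw [expand] at key
  exact key

end main

section main
variable {ν : Measure ℝ} [IsProbabilityMeasure ν]

lemma frostman_of (hsupp : ν (Set.Icc (0:ℝ) 1)ᶜ = 0) {q0 w τq0 : ℝ} (hq0 : 0 < q0)
    (hw : 0 < w) (hwu : w < τq0 / q0)
    (h : Tendsto (fun r : ℝ => Real.log (Mrq ν q0 r).toReal / Real.log r) (𝓝[>] 0) (𝓝 τq0)) :
    ∃ C : ℝ, 0 < C ∧ ∀ a b : ℝ, 0 ≤ a → a ≤ b → b ≤ 1 →
      ν (Set.Icc a b) ≤ ENNReal.ofReal (C * (b - a) ^ w) := by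
  set u : ℝ := (w + τq0 / q0) / 2 with hudef
  have hu : 0 < u := by linarith
  have hwu2 : w < u := by linarith
  have huq : u * q0 < τq0 := by
    have : u < τq0 / q0 := by linarith
    calc u * q0 < (τq0 / q0) * q0 := by
          apply mul_lt_mul_of_pos_right this hq0
      _ = τq0 := by field_simp
  have hev : ∀ᶠ r in 𝓝[>] (0:ℝ),
      u * q0 < Real.log (Mrq ν q0 r).toReal / Real.log r ∧ r < 1 := by
    refine (h.eventually_const_lt huq).and ?_
    exact eventually_nhdsWithin_of_eventually_nhds
      (eventually_iff.2 (by exact Iio_mem_nhds (show (0:ℝ) < 1 by norm_num)))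
  obtain ⟨ε, hε, hsub⟩ := Metric.mem_nhdsWithin_iff.1 hev
  have key : ∀ r : ℝ, 0 < r → r < ε → ∀ x ∈ mSupp ν,
      ν (Metric.ball x r) ≤ ENNReal.ofReal (r ^ u) := by
    intro r hr0 hrε x hx
    have hrS : u * q0 < Real.log (Mrq ν q0 r).toReal / Real.log r ∧ r < 1 := by
      apply hsub
      constructor
      · simp only [Metric.mem_ball, Real.dist_eq, sub_zero]
        rwa [abs_of_pos hr0]
      · exact hr0
    obtain ⟨hfr, hr1⟩ := hrS
    set m : ℝ := (Mrq ν q0 r).toReal with hmdef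
    have hmpos : 0 < m := Mrq_toReal_pos hsupp hq0 hr0
    have hMne : Mrq ν q0 r ≠ ∞ := Mrq_ne_top hsupp hq0 hr0
    have hlogr : Real.log r < 0 := Real.log_neg hr0 hr1
    have hlm : Real.log m < (u * q0) * Real.log r := (lt_div_iff_of_neg hlogr).1 hfr
    have hmr : m ≤ r ^ (u * q0) := by
      have h1 : m = Real.exp (Real.log m) := (Real.exp_log hmpos).symm
      rw [h1, Real.rpow_def_of_pos hr0]
      exact (Real.exp_le_exp.2 (by rw [mul_comm]; exact hlm.le))
    set a' : ℝ := (ν (Metric.ball x r)).toReal with ha'def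
    have ha'0 : 0 ≤ a' := ENNReal.toReal_nonneg
    have ha'q : a' ^ q0 ≤ m := by
      have h2 := ENNReal.toReal_mono hMne (le_Mrq (q := q0) (r := r) hx)
      rwa [← ENNReal.toReal_rpow] at h2
    have ha'r : a' ≤ r ^ u := by
      have h3 : (a' ^ q0) ^ (1/q0) ≤ (r ^ (u * q0)) ^ (1/q0) :=
        Real.rpow_le_rpow (by positivity) (le_trans ha'q hmr) (by positivity)
      rwa [← Real.rpow_mul ha'0, ← Real.rpow_mul hr0.le,
        mul_one_div, div_self hq0.ne', Real.rpow_one,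
        show u * q0 * (1/q0) = u by field_simp] at h3
    calc ν (Metric.ball x r) = ENNReal.ofReal a' :=
          (ENNReal.ofReal_toReal (measure_ne_top ν _)).symm
      _ ≤ ENNReal.ofReal (r ^ u) := ENNReal.ofReal_le_ofReal ha'r
  have claim : ∀ a b : ℝ, 0 ≤ a → a ≤ b → b ≤ 1 → ∀ ℓ' : ℝ, b - a ≤ ℓ' → 0 < ℓ' →
      2 * ℓ' < ε → (ν (Set.Icc a b)).toReal ≤ (2 * ℓ') ^ u := by
    intro a b ha hab hb1 ℓ' hℓ' hℓ'0 hℓ'ε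
    rcases eq_or_ne (ν (Set.Icc a b)) 0 with h0 | h0
    · rw [h0]; simp only [ENNReal.toReal_zero]; positivity
    · obtain ⟨x, hxI, hxs⟩ := nonempty_inter_mSupp h0
      have hsub2 : Set.Icc a b ⊆ Metric.ball x (2 * ℓ') := by
        intro y hy
        simp only [Metric.mem_ball]
        calc dist y x ≤ b - a := Real.dist_le_of_mem_Icc hy hxI
          _ ≤ ℓ' := hℓ'
          _ < 2 * ℓ' := by linarith
      have h4 := key (2 * ℓ') (by linarith) hℓ'ε x hxs
      exact ENNReal.toReal_le_of_le_ofReal (by positivity)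
        (le_trans (measure_mono hsub2) h4)
  have hpoint : ∀ a b : ℝ, 0 ≤ a → a ≤ b → b ≤ 1 → b - a = 0 → ν (Set.Icc a b) = 0 := by
    intro a b ha hab hb1 hba
    by_contra hne
    have hc : 0 < (ν (Set.Icc a b)).toReal :=
      ENNReal.toReal_pos hne (measure_ne_top ν _)
    set c : ℝ := (ν (Set.Icc a b)).toReal with hcdef
    set ℓ' : ℝ := min (ε/4) (c ^ u⁻¹ / 4) with hℓ'def
    have hℓ'0 : 0 < ℓ' := by
      apply lt_min (by linarith)
      have : 0 < c ^ u⁻¹ := Real.rpow_pos_of_pos hc _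
      linarith
    have h5 := claim a b ha hab hb1 ℓ' (by linarith) hℓ'0
      (by
        have : ℓ' ≤ ε/4 := min_le_left _ _
        linarith)
    have h6 : (2*ℓ') ^ u ≤ (c ^ u⁻¹ / 2) ^ u := by
      apply Real.rpow_le_rpow (by positivity) _ hu.le
      have : ℓ' ≤ c ^ u⁻¹ / 4 := min_le_right _ _
      linarith
    have h7 : (c ^ u⁻¹ / 2) ^ u = c / 2 ^ u := by
      rw [Real.div_rpow (by positivity) (by norm_num), ← Real.rpow_mul hc.le,
        inv_mul_cancel₀ hu.ne', Real.rpow_one]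
    have h8 : c / 2 ^ u < c := by
      apply div_lt_self hc
      rw [show (2:ℝ)^u = (2:ℝ)^u from rfl]
      exact (Real.one_lt_rpow_iff_of_pos (by norm_num)).2 (Or.inl ⟨one_lt_two, hu⟩)
    rw [← hcdef] at h5
    rw [h7] at h6
    linarith
  set d : ℝ := min (ε/2) 1 with hddef
  have hd0 : 0 < d := lt_min (by linarith) one_pos
  refine ⟨(2:ℝ)^u + ((d ^ w)⁻¹), by positivity, ?_⟩
  intro a b ha hab hb1
  set ℓ : ℝ := b - a with hℓdef
  have hℓ0 : 0 ≤ ℓ := by simp [hℓdef]; linarith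
  rcases eq_or_lt_of_le hℓ0 with hz | hpos
  · rw [hpoint a b ha hab hb1 hz.symm]
    exact zero_le
  · have hℓ1 : ℓ ≤ 1 := by simp only [hℓdef]; linarith
    have hbound : (ν (Set.Icc a b)).toReal ≤ ((2:ℝ)^u + ((d ^ w)⁻¹)) * ℓ ^ w := by
      by_cases hcase : 2 * ℓ < ε
      · have h9 := claim a b ha hab hb1 ℓ (le_refl _) hpos hcase
        have h10 : (2*ℓ)^u = 2^u * ℓ^u := Real.mul_rpow (by norm_num) hℓ0
        have h11 : ℓ ^ u ≤ ℓ ^ w := Real.rpow_le_rpow_of_exponent_ge hpos hℓ1 hwu2.le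
        have h12 : (ν (Set.Icc a b)).toReal ≤ 2^u * ℓ^w := by
          calc (ν (Set.Icc a b)).toReal ≤ (2*ℓ)^u := h9
            _ = 2^u * ℓ^u := h10
            _ ≤ 2^u * ℓ^w := by
                apply mul_le_mul_of_nonneg_left h11 (by positivity)
        calc (ν (Set.Icc a b)).toReal ≤ 2^u * ℓ^w := h12
          _ ≤ ((2:ℝ)^u + ((d ^ w)⁻¹)) * ℓ ^ w := by
              apply mul_le_mul_of_nonneg_right _ (by positivity)
              have : (0:ℝ) < (d ^ w)⁻¹ := by positivity
              linarith
      · push_neg at hcase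
        have hdℓ : d ≤ ℓ := by
          have : d ≤ ε/2 := min_le_left _ _
          linarith
        have h13 : d ^ w ≤ ℓ ^ w := Real.rpow_le_rpow hd0.le hdℓ hw.le
        have h14 : (1:ℝ) ≤ (d ^ w)⁻¹ * ℓ ^ w := by
          rw [← div_eq_inv_mul, le_div_iff₀ (by positivity : (0:ℝ) < d ^ w)]
          linarith
        calc (ν (Set.Icc a b)).toReal ≤ 1 := by
              have := prob_le_one (μ := ν) (s := Set.Icc a b)
              have h15 := ENNReal.toReal_mono (by norm_num) this
              simpa using h15
          _ ≤ (d ^ w)⁻¹ * ℓ ^ w := h14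
          _ ≤ ((2:ℝ)^u + ((d ^ w)⁻¹)) * ℓ ^ w := by
              apply mul_le_mul_of_nonneg_right _ (by positivity)
              have : (0:ℝ) < (2:ℝ)^u := by positivity
              linarith
    exact (ENNReal.le_ofReal_iff_toReal_le (measure_ne_top ν _) (by positivity)).2 hbound

theorem stmt2 (ν : Measure ℝ) [IsProbabilityMeasure ν] (hsupp : ν (Set.Icc (0:ℝ) 1)ᶜ = 0)
    (τ : ℝ → ℝ)
    (hτ : ∀ q : ℝ, 0 < q →
      Tendsto (fun r : ℝ => Real.log (Mrq ν q r).toReal / Real.log r) (𝓝[>] 0) (𝓝 (τ q))) :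
    frostmanExp01 ν = sInf {t : ℝ | 0 ≤ t ∧ ∀ q : ℝ, 0 < q → τ q < t * q} := by
  classical
  set F : Set ℝ := {t : ℝ | 0 ≤ t ∧ ∃ C : ℝ, 0 < C ∧ ∀ a b : ℝ, 0 ≤ a → a ≤ b → b ≤ 1 →
    ν (Set.Icc a b) ≤ ENNReal.ofReal (C * (b - a) ^ t)} with hFdef
  set T : Set ℝ := {t : ℝ | 0 ≤ t ∧ ∀ q : ℝ, 0 < q → τ q < t * q} with hTdef
  have hgoal : frostmanExp01 ν = sSup F := rfl
  rw [hgoal]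
  have hF0 : (0:ℝ) ∈ F := by
    refine ⟨le_refl 0, 1, one_pos, fun a b ha hab hb1 => ?_⟩
    rw [Real.rpow_zero, mul_one, ENNReal.ofReal_one]
    exact prob_le_one
  have hT3 : (3:ℝ) ∈ T := by
    refine ⟨by norm_num, fun q hq => ?_⟩
    have := tau_le hsupp hq (hτ q hq)
    nlinarith
  have hkey : ∀ t ∈ F, ∀ t' ∈ T, t ≤ t' := by
    intro t ht t' ht'
    by_contra hlt
    push_neg at hlt
    obtain ⟨ht0, C, hC, hFt⟩ := ht
    set q : ℝ := 2/(t - t') with hqdef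
    have htt' : 0 < t - t' := by linarith
    have hq : 0 < q := by positivity
    have h1 := tau_ge hsupp hq ht0 hC hFt (hτ q hq)
    have h2 := ht'.2 q hq
    have h3 : (t - t') * q = 2 := by
      rw [hqdef]
      field_simp
    nlinarith
  have hFbdd : BddAbove F := ⟨3, fun t ht => hkey t ht 3 hT3⟩
  have hFne : F.Nonempty := ⟨0, hF0⟩
  have hs0 : 0 ≤ sSup F := le_csSup hFbdd hF0
  apply le_antisymm
  · exact le_csInf ⟨3, hT3⟩ (fun t' ht' => csSup_le hFne (fun t ht => hkey t ht t' ht'))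
  · have hmem : ∀ ε : ℝ, 0 < ε → (sSup F + ε) ∈ T := by
      intro ε hε
      refine ⟨by linarith, fun q hq => ?_⟩
      by_contra hno
      push_neg at hno
      have hwu : sSup F + ε/2 < τ q / q := by
        rw [lt_div_iff₀ hq]
        nlinarith
      obtain ⟨C, hC, hFr⟩ := frostman_of hsupp hq (by linarith : (0:ℝ) < sSup F + ε/2)
        hwu (hτ q hq)
      have hmem2 : sSup F + ε/2 ∈ F := ⟨by linarith, C, hC, hFr⟩
      have := le_csSup hFbdd hmem2
      linarith
    by_contra hlt
    push_neg at hlt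
    have hε := hmem ((sInf T - sSup F)/2) (by linarith)
    have := csInf_le ⟨0, fun t ht => ht.1⟩ hε
    linarith

end main
end

section
/- Let ν be a Borel probability measure on [0,1] whose support is not a singleton, and suppose ν is self-similar: ν = Σ_{i=1}^m p_i ν∘f_i^{−1} for contracting similarities f_i of ℝ and probabilities p_i > 0. Then s(ν) = sup{ t ≥ 0 : ∃ C > 0 with ν(I) ≤ C|I|^t for all intervals I ⊆ [0,1] } is strictly positive. -/
open MeasureTheory Filter
open scoped ENNReal ENat Topology

def wMap {m : ℕ} (f : Fin m → ℝ → ℝ) : (n : ℕ) → (Fin n → Fin m) → ℝ → ℝ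
  | 0, _ => id
  | n+1, w => f (w 0) ∘ wMap f n (fun j => j.succ |> w)

lemma wMap_cons {m n : ℕ} (f : Fin m → ℝ → ℝ) (i : Fin m) (w : Fin n → Fin m) :
    wMap f (n+1) (Fin.cons i w) = f i ∘ wMap f n w := by
  have h1 : (fun j : Fin n => (Fin.cons (α := fun _ => Fin m) i w) j.succ) = w := by
    funext j; simp
  show f ((Fin.cons (α := fun _ => Fin m) i w) 0) ∘
      wMap f n (fun j => (Fin.cons (α := fun _ => Fin m) i w) j.succ) = _
  rw [h1, Fin.cons_zero]

lemma wMap_dist {m : ℕ} (f : Fin m → ℝ → ℝ) (c : Fin m → ℝ)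
    (hsim : ∀ i x y, dist (f i x) (f i y) = c i * dist x y) :
    ∀ (n : ℕ) (w : Fin n → Fin m) (x y : ℝ),
      dist (wMap f n w x) (wMap f n w y) = (∏ j, c (w j)) * dist x y := by
  intro n
  induction n with
  | zero => intro w x y; simp [wMap]
  | succ n IH =>
    intro w x y
    show dist (f (w 0) _) (f (w 0) _) = _
    rw [hsim, IH, Fin.prod_univ_succ, mul_assoc]

lemma wMap_measurable {m : ℕ} (f : Fin m → ℝ → ℝ) (hf : ∀ i, Measurable (f i)) :
    ∀ (n : ℕ) (w : Fin n → Fin m), Measurable (wMap f n w) := by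
  intro n
  induction n with
  | zero => intro w; simpa [wMap] using measurable_id
  | succ n IH => intro w; exact (hf (w 0)).comp (IH _)

lemma map_finsetSum' {ι : Type*} (s : Finset ι) (μ : ι → Measure ℝ) (g : ℝ → ℝ)
    (hg : Measurable g) : (∑ i ∈ s, μ i).map g = ∑ i ∈ s, (μ i).map g := by
  classical
  induction s using Finset.induction_on with
  | empty => simp
  | @insert a s' ha IH => simp [Finset.sum_insert ha, Measure.map_add _ _ hg, IH]

lemma decompN {m : ℕ} (ν : Measure ℝ) (p : Fin m → ℝ≥0∞) (f : Fin m → ℝ → ℝ)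
    (hf : ∀ i, Measurable (f i)) (hself : ν = ∑ i, p i • ν.map (f i)) :
    ∀ n : ℕ, ν = ∑ w : Fin n → Fin m, (∏ j, p (w j)) • ν.map (wMap f n w) := by
  intro n
  induction n with
  | zero =>
    have : (Finset.univ : Finset (Fin 0 → Fin m)) = {fun j => j.elim0} := by
      apply Finset.eq_singleton_iff_unique_mem.2
      refine ⟨Finset.mem_univ _, fun w _ => ?_⟩
      funext j; exact j.elim0
    rw [this]
    simp [wMap, Measure.map_id]
  | succ n IH =>
    calc ν = ∑ i, p i • ν.map (f i) := hself
    _ = ∑ i, ∑ w : Fin n → Fin m,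
          (p i * ∏ j, p (w j)) • ν.map (f i ∘ wMap f n w) := by
        refine Finset.sum_congr rfl fun i _ => ?_
        conv_lhs => rw [IH]
        rw [map_finsetSum' _ _ _ (hf i), Finset.smul_sum]
        refine Finset.sum_congr rfl fun w _ => ?_
        rw [Measure.map_smul, Measure.map_map (hf i) (wMap_measurable f hf n w),
          smul_smul]
    _ = ∑ wp : Fin m × (Fin n → Fin m),
          (p wp.1 * ∏ j, p (wp.2 j)) • ν.map (f wp.1 ∘ wMap f n wp.2) := by
        rw [Fintype.sum_prod_type]
    _ = ∑ w : Fin (n+1) → Fin m, (∏ j, p (w j)) • ν.map (wMap f (n+1) w) := by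
        refine Fintype.sum_equiv (Fin.consEquiv (fun _ => Fin m)) _ _ fun wp => ?_
        have h1 : (Fin.consEquiv (fun _ => Fin m)) wp = Fin.cons wp.1 wp.2 := rfl
        rw [h1, wMap_cons, Fin.prod_univ_succ]
        simp [Fin.cons_zero, Fin.cons_succ]

lemma mSupp_compl_null (ν : Measure ℝ) : ν (mSupp ν)ᶜ = 0 := by
  apply measure_null_of_locally_null
  intro x hx
  simp only [mSupp, Set.mem_compl_iff, Set.mem_setOf_eq, not_forall] at hx
  obtain ⟨r, hr, hr0⟩ := hx
  refine ⟨Metric.ball x r, mem_nhdsWithin_of_mem_nhds (Metric.ball_mem_nhds x hr), ?_⟩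
  exact le_antisymm (le_of_not_gt hr0) zero_le

lemma mSupp_subset_of_closed (ν : Measure ℝ) {s : Set ℝ} (hcl : IsClosed s)
    (hν : ν sᶜ = 0) : mSupp ν ⊆ s := by
  intro x hx
  by_contra hxs
  obtain ⟨r, hr, hball⟩ := Metric.isOpen_iff.1 hcl.isOpen_compl x hxs
  exact absurd (le_antisymm ((measure_mono hball).trans hν.le) zero_le)
    (hx r hr).ne'

theorem stmt14_aux (ν : Measure ℝ) [IsProbabilityMeasure ν] (hsupp : ν (Set.Icc (0:ℝ) 1)ᶜ = 0)
    (m : ℕ) (hm : 1 ≤ m) (p : Fin m → ℝ≥0∞) (hp : ∀ i, 0 < p i) (hpsum : ∑ i, p i = 1)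
    (f : Fin m → ℝ → ℝ) (c : Fin m → ℝ) (hc : ∀ i, 0 < c i ∧ c i < 1)
    (hsim : ∀ i x y, dist (f i x) (f i y) = c i * dist x y)
    (hself : ν = ∑ i, p i • ν.map (f i))
    (hns : ¬ ∃ x : ℝ, mSupp ν = {x}) :
    0 < sSup {t : ℝ | 0 ≤ t ∧ ∃ C : ℝ, 0 < C ∧ ∀ a b : ℝ, 0 ≤ a → a ≤ b → b ≤ 1 →
      ν (Set.Icc a b) ≤ ENNReal.ofReal (C * (b - a) ^ t)} := by
  classical
  have : Nonempty (Fin m) := ⟨⟨0, hm⟩⟩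
  set S := {t : ℝ | 0 ≤ t ∧ ∃ C : ℝ, 0 < C ∧ ∀ a b : ℝ, 0 ≤ a → a ≤ b → b ≤ 1 →
      ν (Set.Icc a b) ≤ ENNReal.ofReal (C * (b - a) ^ t)} with hS
  -- basic facts
  have hfc : ∀ i, Continuous (f i) := by
    intro i
    refine (LipschitzWith.of_dist_le_mul (K := ⟨c i, (hc i).1.le⟩)
      (fun x y => ?_)).continuous
    rw [hsim]
    exact le_rfl
  have hfm : ∀ i, Measurable (f i) := fun i => (hfc i).measurable
  have hple : ∀ i, p i ≤ 1 := fun i => hpsum ▸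
    Finset.single_le_sum (fun j _ => zero_le) (Finset.mem_univ i)
  set K := mSupp ν with hKdef
  have hKnull : ν Kᶜ = 0 := mSupp_compl_null ν
  have hK01 : K ⊆ Set.Icc 0 1 := mSupp_subset_of_closed ν isClosed_Icc hsupp
  have hKbdd : Bornology.IsBounded K := Metric.isBounded_Icc (0:ℝ) 1 |>.subset hK01
  have hdiamK : Metric.diam K ≤ 1 := by
    have h := Metric.diam_mono hK01 (Metric.isBounded_Icc (0:ℝ) 1)
    rw [Real.diam_Icc zero_le_one] at h
    linarith
  -- two distinct points of the support
  obtain ⟨x₀, hx₀⟩ : ∃ x, x ∈ K := by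
    by_contra h
    push_neg at h
    have hKe : Kᶜ = Set.univ := by
      ext x; simp [h x]
    have h1 : ν Set.univ = 0 := hKe ▸ hKnull
    rw [measure_univ] at h1
    exact one_ne_zero h1
  obtain ⟨y₀, hy₀, hxy⟩ : ∃ y ∈ K, y ≠ x₀ := by
    by_contra h
    push_neg at h
    exact hns ⟨x₀, Set.eq_singleton_iff_unique_mem.2 ⟨hx₀, h⟩⟩
  set r : ℝ := dist x₀ y₀ / 10 with hrdef
  have hr : 0 < r := by
    have := dist_pos.2 hxy
    rw [dist_comm] at this
    positivity
  have hr1 : r ≤ 1 / 10 := by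
    have h1 : dist x₀ y₀ ≤ 1 := by
      obtain ⟨h0, h1⟩ := hK01 hx₀
      obtain ⟨h2, h3⟩ := hK01 hy₀
      rw [Real.dist_eq, abs_sub_le_iff]; constructor <;> linarith
    rw [hrdef]; linarith
  set ε := min (ν (Metric.ball x₀ r)) (ν (Metric.ball y₀ r)) with hεdef
  have hε : 0 < ε := lt_min (hx₀ r hr) (hy₀ r hr)
  have hε1 : ε ≤ 1 := le_trans (min_le_left _ _) prob_le_one
  -- contraction bounds
  set cmax : ℝ := Finset.univ.sup' Finset.univ_nonempty c with hcmaxdef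
  set cmin : ℝ := Finset.univ.inf' Finset.univ_nonempty c with hcmindef
  have hcmax1 : cmax < 1 := by
    rw [hcmaxdef, Finset.sup'_lt_iff]; exact fun i _ => (hc i).2
  have hcmaxle : ∀ i, c i ≤ cmax := fun i => Finset.le_sup' c (Finset.mem_univ i)
  have hcmax0 : 0 < cmax := lt_of_lt_of_le (hc ⟨0, hm⟩).1 (hcmaxle _)
  have hcmin0 : 0 < cmin := by
    rw [hcmindef, Finset.lt_inf'_iff]; exact fun i _ => (hc i).1
  have hcminle : ∀ i, cmin ≤ c i := fun i => Finset.inf'_le c (Finset.mem_univ i)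
  have hcmin1 : cmin < 1 := lt_of_le_of_lt (hcminle ⟨0, hm⟩) (hc _).2
  obtain ⟨n, hn⟩ : ∃ n, cmax ^ n < r := exists_pow_lt_of_lt_one hr hcmax1
  have hn1 : 1 ≤ n := by
    by_contra h
    push_neg at h
    interval_cases n
    simp only [pow_zero] at hn
    linarith
  set ρ : ℝ := cmin ^ n with hρdef
  have hρ0 : 0 < ρ := pow_pos hcmin0 n
  have hρ1 : ρ < 1 := pow_lt_one₀ hcmin0.le hcmin1 (by omega)
  -- product bounds for words
  set cw : (Fin n → Fin m) → ℝ := fun w => ∏ j, c (w j) with hcwdef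
  have hcw0 : ∀ w, 0 < cw w := fun w => Finset.prod_pos fun j _ => (hc _).1
  have hcwρ : ∀ w, ρ ≤ cw w := by
    intro w
    have h1 : (∏ _j : Fin n, cmin) ≤ ∏ j, c (w j) :=
      Finset.prod_le_prod (fun j _ => hcmin0.le) (fun j _ => hcminle _)
    simpa [Finset.prod_const] using h1
  have hcwmax : ∀ w, cw w ≤ cmax ^ n := by
    intro w
    have h1 : (∏ j, c (w j)) ≤ ∏ _j : Fin n, cmax :=
      Finset.prod_le_prod (fun j _ => (hc _).1.le) (fun j _ => hcmaxle _)
    simpa [Finset.prod_const] using h1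
  set q : (Fin n → Fin m) → ℝ≥0∞ := fun w => ∏ j, p (w j) with hqdef
  set F : (Fin n → Fin m) → ℝ → ℝ := fun w => wMap f n w with hFdef
  have hFm : ∀ w, Measurable (F w) := fun w => wMap_measurable f hfm n w
  have hFdist : ∀ w x y, dist (F w x) (F w y) = cw w * dist x y :=
    fun w x y => wMap_dist f c hsim n w x y
  have happly : ∀ A : Set ℝ, MeasurableSet A → ν A = ∑ w, q w * ν (F w ⁻¹' A) := by
    intro A hA
    conv_lhs => rw [decompN ν p f hfm hself n]
    rw [Measure.finset_sum_apply]
    exact Finset.sum_congr rfl fun w _ => by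
      rw [Measure.smul_apply, Measure.map_apply (hFm w) hA, smul_eq_mul]
  have hq1 : ∑ w, q w = 1 := by
    have := happly Set.univ MeasurableSet.univ
    simp only [Set.preimage_univ, measure_univ, mul_one] at this
    exact this.symm
  -- the bad word set
  set Bad : Set ℝ → Finset (Fin n → Fin m) :=
    fun A => Finset.univ.filter (fun w => (F w '' K ∩ A).Nonempty) with hBadDef
  have hBadEq : ∀ A : Set ℝ, MeasurableSet A →
      ν A = ∑ w ∈ Bad A, q w * ν (F w ⁻¹' A) := by
    intro A hA
    rw [happly A hA]
    refine (Finset.sum_subset (Finset.filter_subset _ _) fun w _ hw => ?_).symm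
    have hemp : F w '' K ∩ A = ∅ := by
      by_contra hne
      exact hw (Finset.mem_filter.2 ⟨Finset.mem_univ _,
        Set.nonempty_iff_ne_empty.2 hne⟩)
    have hsub : F w ⁻¹' A ⊆ Kᶜ := by
      intro x hx hxK
      have : F w x ∈ F w '' K ∩ A := ⟨⟨x, hxK, rfl⟩, hx⟩
      rw [hemp] at this
      exact this
    have : ν (F w ⁻¹' A) = 0 :=
      le_antisymm ((measure_mono hsub).trans hKnull.le) zero_le
    rw [this, mul_zero]
  have hFKbdd : ∀ w, Bornology.IsBounded (F w '' K) := by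
    intro w
    refine Metric.isBounded_iff.2 ⟨cmax ^ n, ?_⟩
    rintro _ ⟨a, ha, rfl⟩ _ ⟨b, hb, rfl⟩
    rw [hFdist]
    calc cw w * dist a b ≤ cmax ^ n * 1 := by
          refine mul_le_mul (hcwmax w) ?_ dist_nonneg (pow_nonneg hcmax0.le n)
          exact (Metric.dist_le_diam_of_mem hKbdd ha hb).trans hdiamK
    _ = cmax ^ n := mul_one _
  have hcyl : ∀ w, Metric.diam (F w '' K) ≤ cmax ^ n := by
    intro w
    refine Metric.diam_le_of_forall_dist_le (pow_nonneg hcmax0.le n) ?_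
    rintro _ ⟨a, ha, rfl⟩ _ ⟨b, hb, rfl⟩
    rw [hFdist]
    calc cw w * dist a b ≤ cmax ^ n * 1 := by
          refine mul_le_mul (hcwmax w) ?_ dist_nonneg (pow_nonneg hcmax0.le n)
          exact (Metric.dist_le_diam_of_mem hKbdd ha hb).trans hdiamK
    _ = cmax ^ n := mul_one _
  have hbadw : ∀ A : Set ℝ, Metric.diam A ≤ r → Bornology.IsBounded A →
      ∑ w ∈ Bad A, q w ≤ 1 - ε := by
    intro A hdA hbA
    rcases (Bad A).eq_empty_or_nonempty with hBe | ⟨w₀, hw₀⟩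
    · rw [hBe, Finset.sum_empty]
      exact zero_le
    · obtain ⟨a₀, ha₀⟩ : (F w₀ '' K ∩ A).Nonempty := by
        simpa [hBadDef, Finset.mem_filter] using hw₀
      have hfar : ∀ w ∈ Bad A, ∀ z ∈ F w '' K, z ∈ Metric.closedBall a₀ (2 * r) := by
        intro w hw z hz
        obtain ⟨aw, hawKA⟩ : (F w '' K ∩ A).Nonempty := by
          simpa [hBadDef, Finset.mem_filter] using hw
        have h1 : dist z aw ≤ cmax ^ n :=
          (Metric.dist_le_diam_of_mem (hFKbdd w) hz hawKA.1).trans (hcyl w)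
        have h2 : dist aw a₀ ≤ r :=
          (Metric.dist_le_diam_of_mem hbA hawKA.2 ha₀.2).trans hdA
        have h3 : dist z a₀ ≤ dist z aw + dist aw a₀ := dist_triangle _ _ _
        rw [Metric.mem_closedBall]
        have := hn.le
        linarith
      have hmain : ∀ z₀, Metric.ball z₀ r ∩ Metric.closedBall a₀ (2 * r) = ∅ →
          ∑ w ∈ Bad A, q w ≤ 1 - ν (Metric.ball z₀ r) := by
        intro z₀ hdisj
        have hz : ∀ w ∈ Bad A, q w * ν (F w ⁻¹' (Metric.ball z₀ r)) = 0 := by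
          intro w hw
          have hsub : F w ⁻¹' Metric.ball z₀ r ⊆ Kᶜ := by
            intro x hx hxK
            have hmemi : F w x ∈ Metric.ball z₀ r ∩ Metric.closedBall a₀ (2 * r) :=
              ⟨hx, hfar w hw _ ⟨x, hxK, rfl⟩⟩
            rw [hdisj] at hmemi
            exact hmemi
          have hz0 : ν (F w ⁻¹' Metric.ball z₀ r) = 0 :=
            le_antisymm ((measure_mono hsub).trans hKnull.le) zero_le
          rw [hz0, mul_zero]
        have h1 : ν (Metric.ball z₀ r) ≤ ∑ w ∈ Finset.univ \ Bad A, q w := by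
          rw [happly _ measurableSet_ball,
            ← Finset.sum_sdiff (Finset.filter_subset (fun w => (F w '' K ∩ A).Nonempty) Finset.univ),
            Finset.sum_eq_zero hz, add_zero]
          refine Finset.sum_le_sum fun w _ => ?_
          calc q w * ν (F w ⁻¹' Metric.ball z₀ r) ≤ q w * 1 :=
                mul_le_mul_right prob_le_one _
          _ = q w := mul_one _
        have h2 : ∑ w ∈ Bad A, q w + ∑ w ∈ Finset.univ \ Bad A, q w = 1 := by
          rw [add_comm, Finset.sum_sdiff (Finset.filter_subset _ _), hq1]
        have hne : ∑ w ∈ Finset.univ \ Bad A, q w ≠ ∞ := by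
          refine ne_top_of_le_ne_top ENNReal.one_ne_top ?_
          rw [← h2]
          exact le_add_self
        have h3 : ∑ w ∈ Bad A, q w = 1 - ∑ w ∈ Finset.univ \ Bad A, q w :=
          ENNReal.eq_sub_of_add_eq hne h2
        rw [h3]
        exact tsub_le_tsub_left h1 1
      have hdisj2 : Metric.ball x₀ r ∩ Metric.closedBall a₀ (2 * r) = ∅ ∨
          Metric.ball y₀ r ∩ Metric.closedBall a₀ (2 * r) = ∅ := by
        by_contra hcon
        push_neg at hcon
        obtain ⟨z₁, hz₁b, hz₁c⟩ := hcon.1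
        obtain ⟨z₂, hz₂b, hz₂c⟩ := hcon.2
        have h4a : dist x₀ y₀ ≤ dist x₀ a₀ + dist a₀ y₀ := dist_triangle _ _ _
        have h4b : dist x₀ a₀ ≤ dist x₀ z₁ + dist z₁ a₀ := dist_triangle _ _ _
        have h4c : dist a₀ y₀ ≤ dist a₀ z₂ + dist z₂ y₀ := dist_triangle _ _ _
        have e1 : dist x₀ z₁ < r := by rw [dist_comm]; exact Metric.mem_ball.1 hz₁b
        have e2 : dist z₁ a₀ ≤ 2 * r := Metric.mem_closedBall.1 hz₁c
        have e3 : dist a₀ z₂ ≤ 2 * r := by rw [dist_comm]; exact Metric.mem_closedBall.1 hz₂c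
        have e4 : dist z₂ y₀ < r := Metric.mem_ball.1 hz₂b
        have e5 : dist x₀ y₀ = 10 * r := by rw [hrdef]; ring
        linarith
      rcases hdisj2 with h | h
      · exact (hmain x₀ h).trans (tsub_le_tsub_left (min_le_left _ _) 1)
      · exact (hmain y₀ h).trans (tsub_le_tsub_left (min_le_right _ _) 1)
  set γ : ℝ≥0∞ := 1 - ε with hγdef
  have hγ1 : γ < 1 := ENNReal.sub_lt_self ENNReal.one_ne_top one_ne_zero hε.ne'
  have hγtop : γ ≠ ∞ := (hγ1.trans ENNReal.one_lt_top).ne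
  -- key induction
  have hpredist : ∀ w (A : Set ℝ), Bornology.IsBounded A →
      Bornology.IsBounded (F w ⁻¹' A) ∧ Metric.diam (F w ⁻¹' A) ≤ Metric.diam A / ρ := by
    intro w A hbA
    have hbound : ∀ x ∈ F w ⁻¹' A, ∀ y ∈ F w ⁻¹' A, dist x y ≤ Metric.diam A / ρ := by
      intro x hx y hy
      have h2 : cw w * dist x y ≤ Metric.diam A := by
        rw [← hFdist w x y]
        exact Metric.dist_le_diam_of_mem hbA hx hy
      have h3 : dist x y ≤ Metric.diam A / cw w := by
        rw [le_div_iff₀ (hcw0 w), mul_comm]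
        exact h2
      exact h3.trans (div_le_div_of_nonneg_left Metric.diam_nonneg hρ0 (hcwρ w))
    exact ⟨Metric.isBounded_iff.2 ⟨_, fun x hx y hy => hbound x hx y hy⟩,
      Metric.diam_le_of_forall_dist_le (div_nonneg Metric.diam_nonneg hρ0.le) hbound⟩
  have key : ∀ (k : ℕ) (A : Set ℝ), MeasurableSet A → Bornology.IsBounded A →
      Metric.diam A ≤ r * ρ ^ k → ν A ≤ γ ^ (k + 1) := by
    intro k
    induction k with
    | zero =>
      intro A hA hbA hdA
      rw [pow_one, hBadEq A hA]
      calc ∑ w ∈ Bad A, q w * ν (F w ⁻¹' A) ≤ ∑ w ∈ Bad A, q w * 1 :=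
            Finset.sum_le_sum fun w _ => mul_le_mul_right prob_le_one _
      _ = ∑ w ∈ Bad A, q w := by simp
      _ ≤ γ := hbadw A (by simpa using hdA) hbA
    | succ k IH =>
      intro A hA hbA hdA
      have hρk1 : ρ ^ (k + 1) ≤ 1 := pow_le_one₀ hρ0.le hρ1.le
      have hdr : Metric.diam A ≤ r := hdA.trans (by nlinarith)
      rw [hBadEq A hA]
      have hterm : ∀ w ∈ Bad A, q w * ν (F w ⁻¹' A) ≤ q w * γ ^ (k + 1) := by
        intro w hw
        refine mul_le_mul_right ?_ _
        obtain ⟨hb', hd'⟩ := hpredist w A hbA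
        refine IH (F w ⁻¹' A) ((hFm w) hA) hb' ?_
        calc Metric.diam (F w ⁻¹' A) ≤ Metric.diam A / ρ := hd'
        _ ≤ r * ρ ^ (k + 1) / ρ := by gcongr
        _ = r * ρ ^ k := by
            field_simp
            ring
      calc ∑ w ∈ Bad A, q w * ν (F w ⁻¹' A) ≤ ∑ w ∈ Bad A, q w * γ ^ (k + 1) :=
            Finset.sum_le_sum hterm
      _ = (∑ w ∈ Bad A, q w) * γ ^ (k + 1) := by rw [Finset.sum_mul]
      _ ≤ γ * γ ^ (k + 1) := mul_le_mul_left (hbadw A hdr hbA) _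
      _ = γ ^ (k + 1 + 1) := (pow_succ' γ (k + 1)).symm
  -- the exponent
  set γ' : ℝ≥0∞ := max γ (ENNReal.ofReal ρ) with hγ'def
  have hγ'1 : γ' < 1 := max_lt hγ1 (ENNReal.ofReal_lt_one.2 hρ1)
  have hγ'top : γ' ≠ ∞ := (hγ'1.trans ENNReal.one_lt_top).ne
  have hγ'0 : γ' ≠ 0 := by
    have h : (0:ℝ≥0∞) < ENNReal.ofReal ρ := ENNReal.ofReal_pos.2 hρ0
    exact (h.trans_le (le_max_right _ _)).ne'
  have key' : ∀ (k : ℕ) (A : Set ℝ), MeasurableSet A → Bornology.IsBounded A →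
      Metric.diam A ≤ r * ρ ^ k → ν A ≤ γ' ^ (k + 1) :=
    fun k A h1 h2 h3 => (key k A h1 h2 h3).trans (pow_le_pow_left' (le_max_left _ _) _)
  set g : ℝ := γ'.toReal with hgdef
  have hg0 : 0 < g := ENNReal.toReal_pos hγ'0 hγ'top
  have hg1 : g < 1 := by
    have h := (ENNReal.toReal_lt_toReal hγ'top ENNReal.one_ne_top).2 hγ'1
    simpa using h
  have hρg : ρ ≤ g := by
    have := ENNReal.toReal_mono hγ'top (le_max_right γ (ENNReal.ofReal ρ))
    rwa [ENNReal.toReal_ofReal hρ0.le] at this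
  set t : ℝ := Real.log g / Real.log ρ with htdef
  have hlogρ : Real.log ρ < 0 := Real.log_neg hρ0 hρ1
  have hlogg : Real.log g < 0 := Real.log_neg hg0 hg1
  have ht : 0 < t := div_pos_of_neg_of_neg hlogg hlogρ
  have hgρt : g = ρ ^ t := by
    rw [Real.rpow_def_of_pos hρ0, htdef, mul_comm, div_mul_cancel₀ _ hlogρ.ne, Real.exp_log hg0]
  -- membership
  have hmem : t ∈ S := by
    refine ⟨ht.le, r ^ (-t), Real.rpow_pos_of_pos hr _, ?_⟩
    intro a b ha hab hb1
    have hℓ0 : (0:ℝ) ≤ b - a := by linarith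
    rcases eq_or_lt_of_le hℓ0 with h0 | hpos
    · have hν0 : ν (Set.Icc a b) = 0 := by
        by_contra hne
        have hposm : 0 < ν (Set.Icc a b) := pos_iff_ne_zero.2 hne
        obtain ⟨k, hk⟩ := ((ENNReal.tendsto_pow_atTop_nhds_zero_of_lt_one
          hγ'1).eventually (gt_mem_nhds hposm)).exists
        have hkk := key' k (Set.Icc a b) measurableSet_Icc (Metric.isBounded_Icc a b)
          (by rw [Real.diam_Icc hab, ← h0]; positivity)
        exact hk.not_ge (hkk.trans (pow_le_pow_of_le_one zero_le hγ'1.le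
          (Nat.le_succ k)))
      rw [hν0]
      exact zero_le
    · rcases le_or_gt (b - a) r with hlr | hrl
      · have hex : ∃ j, r * ρ ^ (j + 1) < b - a := by
          obtain ⟨j, hj⟩ := exists_pow_lt_of_lt_one (div_pos hpos hr) hρ1
          refine ⟨j, ?_⟩
          have h1 : ρ ^ (j + 1) ≤ ρ ^ j := pow_le_pow_of_le_one hρ0.le hρ1.le (Nat.le_succ j)
          have h2 : r * ρ ^ j < b - a := by
            rw [lt_div_iff₀ hr] at hj
            linarith
          nlinarith
        set k := Nat.find hex with hkdef
        have hk1 : r * ρ ^ (k + 1) < b - a := Nat.find_spec hex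
        have hk2 : b - a ≤ r * ρ ^ k := by
          rcases Nat.eq_zero_or_pos k with hk0 | hkpos
          · rw [hk0, pow_zero, mul_one]
            exact hlr
          · have hmin := Nat.find_min hex (show k - 1 < k from Nat.sub_lt hkpos one_pos)
            have hks : k - 1 + 1 = k := Nat.succ_pred_eq_of_pos hkpos
            rw [hks] at hmin
            exact not_lt.1 hmin
        have hkey := key' k (Set.Icc a b) measurableSet_Icc (Metric.isBounded_Icc a b)
          (by rw [Real.diam_Icc hab]; exact hk2)
        refine hkey.trans ?_
        have hγ'g : γ' ^ (k + 1) = ENNReal.ofReal (g ^ (k + 1)) := by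
          rw [ENNReal.ofReal_pow hg0.le, hgdef, ENNReal.ofReal_toReal hγ'top]
        rw [hγ'g]
        apply ENNReal.ofReal_le_ofReal
        have e1 : g ^ (k + 1) = ((ρ ^ (k + 1) : ℝ)) ^ t := by
          rw [hgρt, ← Real.rpow_natCast (ρ ^ t) (k + 1), ← Real.rpow_mul hρ0.le,
            mul_comm, Real.rpow_mul hρ0.le, Real.rpow_natCast]
        have e2 : ((ρ ^ (k + 1) : ℝ)) ^ t ≤ ((b - a) / r) ^ t := by
          refine Real.rpow_le_rpow (pow_nonneg hρ0.le _) ?_ ht.le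
          rw [le_div_iff₀ hr, mul_comm]
          exact hk1.le
        have e3 : ((b - a) / r) ^ t = r ^ (-t) * (b - a) ^ t := by
          rw [Real.div_rpow hℓ0 hr.le, Real.rpow_neg hr.le]
          ring
        rw [e1]
        exact e2.trans_eq e3
      · have h1 : (1:ℝ) ≤ r ^ (-t) * (b - a) ^ t := by
          have h2 : r ^ t ≤ (b - a) ^ t := Real.rpow_le_rpow hr.le hrl.le ht.le
          have hp' : 0 < r ^ t := Real.rpow_pos_of_pos hr t
          rw [Real.rpow_neg hr.le, inv_mul_eq_div, le_div_iff₀ hp', one_mul]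
          exact h2
        calc ν (Set.Icc a b) ≤ 1 := prob_le_one
        _ = ENNReal.ofReal 1 := ENNReal.ofReal_one.symm
        _ ≤ _ := ENNReal.ofReal_le_ofReal h1
  -- bounded above
  have hbdd : BddAbove S := by
    set i0 : Fin m := ⟨0, hm⟩ with hi0
    set β : ℝ := c i0 with hβdef
    have hβ0 : 0 < β := (hc i0).1
    have hβ1 : β < 1 := (hc i0).2
    have hPtop : p i0 ≠ ∞ := (lt_of_le_of_lt (hple i0) ENNReal.one_lt_top).ne
    set q0 : ℝ := (p i0).toReal with hq0def
    have hq00 : 0 < q0 := ENNReal.toReal_pos (hp i0).ne' hPtop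
    have hIcc1 : ν (Set.Icc (0:ℝ) 1) = 1 := by
      have h := measure_add_measure_compl (μ := ν) (measurableSet_Icc (a := (0:ℝ)) (b := 1))
      rw [hsupp, add_zero, measure_univ] at h
      exact h
    have hiterdist : ∀ (k : ℕ) (x y : ℝ),
        dist ((f i0)^[k] x) ((f i0)^[k] y) = β ^ k * dist x y := by
      intro k
      induction k with
      | zero => intro x y; simp
      | succ k IH =>
        intro x y
        rw [Function.iterate_succ', Function.comp_apply, Function.comp_apply,
          hsim, IH, pow_succ]
        ring
    have hiter : ∀ k : ℕ, p i0 ^ k ≤ ν ((f i0)^[k] '' Set.Icc 0 1) := by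
      intro k
      induction k with
      | zero => simp [hIcc1]
      | succ k IH =>
        have hAm : MeasurableSet ((f i0)^[k+1] '' Set.Icc 0 1) :=
          ((isCompact_Icc.image ((hfc i0).iterate (k+1))).isClosed).measurableSet
        have h1 : ν ((f i0)^[k+1] '' Set.Icc 0 1) =
            ∑ i, p i * ν (f i ⁻¹' ((f i0)^[k+1] '' Set.Icc 0 1)) := by
          conv_lhs => rw [hself]
          rw [Measure.finset_sum_apply]
          exact Finset.sum_congr rfl fun i _ => by
            rw [Measure.smul_apply, Measure.map_apply (hfm i) hAm, smul_eq_mul]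
        have h2 : p i0 * ν (f i0 ⁻¹' ((f i0)^[k+1] '' Set.Icc 0 1)) ≤
            ν ((f i0)^[k+1] '' Set.Icc 0 1) := by
          rw [h1]
          exact Finset.single_le_sum
            (f := fun i => p i * ν (f i ⁻¹' ((f i0)^[k+1] '' Set.Icc 0 1)))
            (fun i _ => zero_le) (Finset.mem_univ i0)
        have h3 : (f i0)^[k] '' Set.Icc 0 1 ⊆ f i0 ⁻¹' ((f i0)^[k+1] '' Set.Icc 0 1) := by
          rintro _ ⟨x, hx, rfl⟩
          refine ⟨x, hx, ?_⟩
          rw [Function.iterate_succ', Function.comp_apply]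
        calc p i0 ^ (k+1) = p i0 * p i0 ^ k := (pow_succ' _ _)
        _ ≤ p i0 * ν ((f i0)^[k] '' Set.Icc 0 1) := mul_le_mul_right IH _
        _ ≤ p i0 * ν (f i0 ⁻¹' ((f i0)^[k+1] '' Set.Icc 0 1)) :=
            mul_le_mul_right (measure_mono h3) _
        _ ≤ _ := h2
    refine ⟨Real.log q0 / Real.log β, fun t' ht' => ?_⟩
    obtain ⟨ht'0, C, hC, hbound⟩ := ht'
    have hstep : ∀ k : ℕ, q0 ^ k ≤ C * 2 ^ t' * (β ^ t') ^ k := by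
      intro k
      set z₀ : ℝ := (f i0)^[k] 0 with hz₀def
      have hsub : (f i0)^[k] '' Set.Icc 0 1 ⊆ Set.Icc (z₀ - β ^ k) (z₀ + β ^ k) := by
        rintro _ ⟨x, hx, rfl⟩
        have hd : dist ((f i0)^[k] x) z₀ ≤ β ^ k := by
          rw [hz₀def, hiterdist]
          calc β ^ k * dist x 0 ≤ β ^ k * 1 := by
                refine mul_le_mul_of_nonneg_left ?_ (pow_nonneg hβ0.le k)
                rw [Real.dist_eq, sub_zero, abs_le]
                exact ⟨by linarith [hx.1], hx.2⟩
          _ = β ^ k := mul_one _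
        rw [Real.dist_eq, abs_le] at hd
        exact ⟨by linarith [hd.2], by linarith [hd.1]⟩
      set a' : ℝ := max (z₀ - β ^ k) 0 with ha'def
      set b' : ℝ := min (z₀ + β ^ k) 1 with hb'def
      have hsub2 : (f i0)^[k] '' Set.Icc 0 1 ∩ Set.Icc 0 1 ⊆ Set.Icc a' b' := by
        rintro x ⟨hx1, hx2⟩
        obtain ⟨hl, hr'⟩ := hsub hx1
        exact ⟨max_le hl hx2.1, le_min hr' hx2.2⟩
      have hν2 : p i0 ^ k ≤ ν (Set.Icc a' b') := by
        have hdiff : ν (((f i0)^[k] '' Set.Icc 0 1) \ Set.Icc 0 1) = 0 := by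
          refine le_antisymm ((measure_mono ?_).trans hsupp.le) zero_le
          exact fun x hx => hx.2
        have h3 : ν ((f i0)^[k] '' Set.Icc 0 1) ≤
            ν ((f i0)^[k] '' Set.Icc 0 1 ∩ Set.Icc 0 1) := by
          calc ν ((f i0)^[k] '' Set.Icc 0 1) ≤
              ν ((f i0)^[k] '' Set.Icc 0 1 ∩ Set.Icc 0 1) +
              ν (((f i0)^[k] '' Set.Icc 0 1) \ Set.Icc 0 1) :=
              measure_le_inter_add_diff _ _ _
          _ = ν ((f i0)^[k] '' Set.Icc 0 1 ∩ Set.Icc 0 1) := by rw [hdiff, add_zero]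
        exact (hiter k).trans (h3.trans (measure_mono hsub2))
      have hab' : a' ≤ b' := by
        by_contra hcon
        rw [Set.Icc_eq_empty (not_le.1 hcon |> le_of_lt |> fun h => hcon), measure_empty] at hν2
        exact absurd (le_antisymm (le_zero_iff.1 hν2 ▸ le_refl _) zero_le)
          (pow_ne_zero k (hp i0).ne')
      have h0a : (0:ℝ) ≤ a' := le_max_right _ _
      have hb1 : b' ≤ 1 := min_le_right _ _
      have hba : b' - a' ≤ 2 * β ^ k := by
        have l1 : b' ≤ z₀ + β ^ k := min_le_left _ _
        have l2 : z₀ - β ^ k ≤ a' := le_max_left _ _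
        linarith
      have hB := hbound a' b' h0a hab' hb1
      have hq0k : ENNReal.ofReal (q0 ^ k) ≤ ENNReal.ofReal (C * (b' - a') ^ t') := by
        have e0 : ENNReal.ofReal (q0 ^ k) = p i0 ^ k := by
          rw [ENNReal.ofReal_pow hq00.le, hq0def, ENNReal.ofReal_toReal hPtop]
        rw [e0]
        exact hν2.trans hB
      have hreal : q0 ^ k ≤ C * (b' - a') ^ t' := by
        refine (ENNReal.ofReal_le_ofReal_iff ?_).1 hq0k
        exact mul_nonneg hC.le (Real.rpow_nonneg (by linarith) _)
      have hbb : (b' - a') ^ t' ≤ (2 * β ^ k) ^ t' :=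
        Real.rpow_le_rpow (by linarith) hba ht'0
      have hsplit : (2 * β ^ k : ℝ) ^ t' = 2 ^ t' * (β ^ t') ^ k := by
        rw [Real.mul_rpow (by norm_num) (pow_nonneg hβ0.le k)]
        congr 1
        rw [← Real.rpow_natCast β k, ← Real.rpow_mul hβ0.le, mul_comm,
          Real.rpow_mul hβ0.le, Real.rpow_natCast]
      calc q0 ^ k ≤ C * (b' - a') ^ t' := hreal
      _ ≤ C * (2 * β ^ k) ^ t' := mul_le_mul_of_nonneg_left hbb hC.le
      _ = C * 2 ^ t' * (β ^ t') ^ k := by rw [hsplit]; ring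
    have hle : q0 ≤ β ^ t' := by
      by_contra hcon
      push_neg at hcon
      have hβt0 : 0 < β ^ t' := Real.rpow_pos_of_pos hβ0 t'
      have hone : 1 < q0 / β ^ t' := (one_lt_div hβt0).2 hcon
      obtain ⟨k, hk⟩ := pow_unbounded_of_one_lt (C * 2 ^ t' : ℝ) hone
      rw [div_pow, lt_div_iff₀ (pow_pos hβt0 k)] at hk
      linarith [hstep k]
    have hlogβ : Real.log β < 0 := Real.log_neg hβ0 hβ1
    rw [le_div_iff_of_neg hlogβ]
    calc Real.log q0 ≤ Real.log (β ^ t') := Real.log_le_log hq00 hle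
    _ = t' * Real.log β := Real.log_rpow hβ0 t'
  exact lt_of_lt_of_le ht (le_csSup hbdd hmem)

theorem stmt14 (ν : Measure ℝ) [IsProbabilityMeasure ν] (hsupp : ν (Set.Icc (0:ℝ) 1)ᶜ = 0)
    (m : ℕ) (hm : 1 ≤ m) (p : Fin m → ℝ≥0∞) (hp : ∀ i, 0 < p i) (hpsum : ∑ i, p i = 1)
    (f : Fin m → ℝ → ℝ) (c : Fin m → ℝ) (hc : ∀ i, 0 < c i ∧ c i < 1)
    (hsim : ∀ i x y, dist (f i x) (f i y) = c i * dist x y)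
    (hself : ν = ∑ i, p i • ν.map (f i))
    (hns : ¬ ∃ x : ℝ, mSupp ν = {x}) :
    0 < frostmanExp01 ν := by
  unfold frostmanExp01
  exact stmt14_aux ν hsupp m hm p hp hpsum f c hc hsim hself hns
end
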